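/- For every natural number n ≥ 1 there exists a finite simple graph G whose Carathéodory number with respect to Δ-convexity equals exactly n. -/

import Mathlib

variable {V : Type*}

/-- `S` is Δ-convex: no vertex outside `S` is adjacent to two adjacent vertices of `S`. -/
def DeltaConvex (G : SimpleGraph V) (S : Set V) : Prop :=
  ∀ ⦃w u v : V⦄, u ∈ S → v ∈ S → G.Adj u v → G.Adj w u → G.Adj w v → w ∈ S

/-- The Δ-convex hull of `S`: the smallest Δ-convex set containing `S`. -/
def deltaHull (G : SimpleGraph V) (S : Set V) : Set V :=
  ⋂₀ {T : Set V | S ⊆ T ∧ DeltaConvex G T}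

/-- `S` is Carathéodory independent for Δ-convexity. -/
def CIndep [DecidableEq V] (G : SimpleGraph V) (S : Finset V) : Prop :=
  ∃ p ∈ deltaHull G ↑S, ∀ a ∈ S, p ∉ deltaHull G ↑(S.erase a)

/-- The Carathéodory number of `G` for Δ-convexity. -/
noncomputable def deltaCaratheodoryNumber [DecidableEq V] [Fintype V]
    (G : SimpleGraph V) : ℕ :=
  sSup {n : ℕ | ∃ S : Finset V, CIndep G S ∧ S.card = n}


lemma subset_deltaHull {G : SimpleGraph V} {S : Set V} : S ⊆ deltaHull G S := by
  intro x hx T hT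
  exact hT.1 hx

lemma deltaHull_convex {G : SimpleGraph V} {S : Set V} : DeltaConvex G (deltaHull G S) := by
  intro w u v hu hv h1 h2 h3 T hT
  exact hT.2 (hu T hT) (hv T hT) h1 h2 h3

lemma deltaHull_min {G : SimpleGraph V} {S T : Set V} (h1 : S ⊆ T) (h2 : DeltaConvex G T) :
    deltaHull G S ⊆ T := fun _ hx => hx T ⟨h1, h2⟩

lemma deltaHull_mono {G : SimpleGraph V} {S S' : Set V} (h : S ⊆ S') :
    deltaHull G S ⊆ deltaHull G S' :=
  deltaHull_min (h.trans subset_deltaHull) deltaHull_convex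

def chainG (n : ℕ) : SimpleGraph (Fin (2*n-1)) where
  Adj u v := u.val ≠ v.val ∧ (u.val + 1 = v.val ∨ v.val + 1 = u.val ∨
      (u.val + 2 = v.val ∧ u.val % 2 = 0) ∨ (v.val + 2 = u.val ∧ v.val % 2 = 0))
  symm := by constructor; intro u v h; omega
  loopless := by constructor; intro u h; omega

lemma adj_mk {n a b : ℕ} (ha : a < 2*n-1) (hb : b < 2*n-1)
    (h : a ≠ b ∧ (a + 1 = b ∨ b + 1 = a ∨ (a + 2 = b ∧ a % 2 = 0) ∨ (b + 2 = a ∧ b % 2 = 0))) :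
    (chainG n).Adj ⟨a, ha⟩ ⟨b, hb⟩ := h

lemma tri {n : ℕ} {u v w : Fin (2*n-1)} (h1 : (chainG n).Adj u v) (h2 : (chainG n).Adj w u)
    (h3 : (chainG n).Adj w v) :
    ∃ i : ℕ, 2*i+2 ≤ 2*n-2 ∧ 2*i ≤ u.val ∧ u.val ≤ 2*i+2 ∧ 2*i ≤ v.val ∧ v.val ≤ 2*i+2 ∧
      2*i ≤ w.val ∧ w.val ≤ 2*i+2 := by
  obtain ⟨h1a, h1b⟩ := h1; obtain ⟨h2a, h2b⟩ := h2; obtain ⟨h3a, h3b⟩ := h3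
  have hu := u.isLt; have hv := v.isLt; have hw := w.isLt
  refine ⟨(min (min u.val v.val) w.val)/2, ?_⟩
  omega
open Finset in
section
inductive Ftri (n : ℕ) (S : Set ℕ) : ℕ → Prop
  | seed (i u v : ℕ) (hu : u ∈ S) (hv : v ∈ S) (huv : u ≠ v)
      (h1 : 2*i ≤ u) (h2 : u ≤ 2*i+2) (h3 : 2*i ≤ v) (h4 : v ≤ 2*i+2)
      (hin : i + 2 ≤ n) : Ftri n S i
  | right (i : ℕ) (h : Ftri n S i) (hs : 2*i+3 ∈ S ∨ 2*i+4 ∈ S) (hin : i + 3 ≤ n) :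
      Ftri n S (i+1)
  | left (i : ℕ) (h : Ftri n S (i+1)) (hs : 2*i ∈ S ∨ 2*i+1 ∈ S) : Ftri n S i
  | merge (i : ℕ) (h1 : Ftri n S i) (h2 : Ftri n S (i+2)) : Ftri n S (i+1)

lemma F_le {n : ℕ} {S : Set ℕ} {i : ℕ} (h : Ftri n S i) : i + 2 ≤ n := by
  induction h with
  | seed i u v hu hv huv h1 h2 h3 h4 hin => exact hin
  | right i h hs hin ih => omega
  | left i h hs ih => omega
  | merge i h1 h2 ih1 ih2 => omega

lemma F_mono {n : ℕ} {S S' : Set ℕ} (hss : S ⊆ S') {i : ℕ} (h : Ftri n S i) : Ftri n S' i := by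
  induction h with
  | seed i u v hu hv huv h1 h2 h3 h4 hin => exact .seed i u v (hss hu) (hss hv) huv h1 h2 h3 h4 hin
  | right i h hs hin ih => exact .right i ih (hs.imp (fun a => hss a) (fun a => hss a)) hin
  | left i h hs ih => exact .left i ih (hs.imp (fun a => hss a) (fun a => hss a))
  | merge i h1 h2 ih1 ih2 => exact .merge i ih1 ih2

lemma helper {n : ℕ} {S : Set ℕ} {i a b : ℕ} (hab : a ≠ b)
    (ha : a ∈ S ∨ ∃ j, Ftri n S j ∧ 2*j ≤ a ∧ a ≤ 2*j+2)
    (hb : b ∈ S ∨ ∃ j, Ftri n S j ∧ 2*j ≤ b ∧ b ≤ 2*j+2)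
    (ha1 : 2*i ≤ a) (ha2 : a ≤ 2*i+2) (hb1 : 2*i ≤ b) (hb2 : b ≤ 2*i+2)
    (hin : i + 2 ≤ n) : Ftri n S i := by
  have mixed : ∀ x y : ℕ, x ≠ y → x ∈ S → (∃ j, Ftri n S j ∧ 2*j ≤ y ∧ y ≤ 2*j+2) →
      2*i ≤ x → x ≤ 2*i+2 → 2*i ≤ y → y ≤ 2*i+2 → Ftri n S i := by
    rintro x y hxy hxS ⟨j, hFj, hj1, hj2⟩ hx1 hx2 hy1 hy2
    rcases (show j + 1 = i ∨ j = i ∨ j = i + 1 by omega) with h | h | h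
    · obtain rfl : i = j + 1 := by omega
      refine .right j hFj ?_ (by omega)
      rcases (show x = 2*j+3 ∨ x = 2*j+4 by omega) with rfl | rfl
      · exact Or.inl hxS
      · exact Or.inr hxS
    · exact h ▸ hFj
    · subst h
      refine .left i hFj ?_
      rcases (show x = 2*i ∨ x = 2*i+1 by omega) with rfl | rfl
      · exact Or.inl hxS
      · exact Or.inr hxS
  rcases ha with haS | ⟨j1, hF1, hj1a, hj1b⟩
  · rcases hb with hbS | hbT
    · exact .seed i a b haS hbS hab ha1 ha2 hb1 hb2 hin
    · exact mixed a b hab haS hbT ha1 ha2 hb1 hb2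
  · rcases hb with hbS | ⟨j2, hF2, hj2a, hj2b⟩
    · exact mixed b a hab.symm hbS ⟨j1, hF1, hj1a, hj1b⟩ hb1 hb2 ha1 ha2
    · by_cases hji1 : j1 = i
      · exact hji1 ▸ hF1
      by_cases hji2 : j2 = i
      · exact hji2 ▸ hF2
      rcases (show (j1 + 1 = i ∧ j2 = i + 1) ∨ (j2 + 1 = i ∧ j1 = i + 1) by omega) with
        ⟨h1, h2⟩ | ⟨h1, h2⟩
      · obtain rfl : i = j1 + 1 := by omega
        obtain rfl : j2 = j1 + 2 := by omega
        exact .merge j1 hF1 hF2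
      · obtain rfl : i = j2 + 1 := by omega
        obtain rfl : j1 = j2 + 2 := by omega
        exact .merge j2 hF2 hF1
end


def valS (n : ℕ) (A : Finset (Fin (2*n-1))) : Set ℕ :=
  {m | ∃ h : m < 2*n-1, (⟨m, h⟩ : Fin (2*n-1)) ∈ A}

lemma valS_mono {n : ℕ} {A B : Finset (Fin (2*n-1))} (h : A ⊆ B) : valS n A ⊆ valS n B := by
  rintro m ⟨hm, hmem⟩
  exact ⟨hm, h hmem⟩

/-- Lemma A: the hull is contained in the explicit description. -/
lemma hull_sub {n : ℕ} (Sf : Finset (Fin (2*n-1))) :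
    deltaHull (chainG n) ↑Sf ⊆
      {v : Fin (2*n-1) | v.val ∈ valS n Sf ∨
        ∃ i, Ftri n (valS n Sf) i ∧ 2*i ≤ v.val ∧ v.val ≤ 2*i+2} := by
  apply deltaHull_min
  · intro x hx
    exact Or.inl ⟨x.isLt, hx⟩
  · intro w u v hu hv h1 h2 h3
    obtain ⟨i, htop, hu1, hu2, hv1, hv2, hw1, hw2⟩ := tri h1 h2 h3
    exact Or.inr ⟨i, helper h1.1 hu hv hu1 hu2 hv1 hv2 (by omega), hw1, hw2⟩

/-- Lemma C: full triangles are inside the hull. -/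
lemma triangle_sub_hull {n : ℕ} (Sf : Finset (Fin (2*n-1))) {i : ℕ}
    (h : Ftri n (valS n Sf) i) :
    ∀ m (hm : m < 2*n-1), 2*i ≤ m → m ≤ 2*i+2 →
      (⟨m, hm⟩ : Fin (2*n-1)) ∈ deltaHull (chainG n) ↑Sf := by
  induction h with
  | seed i u v hu hv huv h1 h2 h3 h4 hin =>
    obtain ⟨hult, humem⟩ := hu
    obtain ⟨hvlt, hvmem⟩ := hv
    have huH : (⟨u, hult⟩ : Fin (2*n-1)) ∈ deltaHull (chainG n) ↑Sf := subset_deltaHull humem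
    have hvH : (⟨v, hvlt⟩ : Fin (2*n-1)) ∈ deltaHull (chainG n) ↑Sf := subset_deltaHull hvmem
    intro m hm hm1 hm2
    by_cases hmu : m = u
    · subst hmu; exact huH
    by_cases hmv : m = v
    · subst hmv; exact hvH
    exact deltaHull_convex huH hvH (adj_mk _ _ (by omega)) (adj_mk _ _ (by omega))
      (adj_mk _ _ (by omega))
  | right i h hs hin ih =>
    have hlt2 : 2*i+2 < 2*n-1 := by omega
    have hlt3 : 2*i+3 < 2*n-1 := by omega
    have hlt4 : 2*i+4 < 2*n-1 := by omega
    have h22 : (⟨2*i+2, hlt2⟩ : Fin (2*n-1)) ∈ deltaHull (chainG n) ↑Sf :=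
      ih _ hlt2 (by omega) (by omega)
    have hh : (⟨2*i+3, hlt3⟩ : Fin (2*n-1)) ∈ deltaHull (chainG n) ↑Sf ∧
        (⟨2*i+4, hlt4⟩ : Fin (2*n-1)) ∈ deltaHull (chainG n) ↑Sf := by
      rcases hs with ⟨hlt, hmem⟩ | ⟨hlt, hmem⟩
      · have h23 : (⟨2*i+3, hlt⟩ : Fin (2*n-1)) ∈ deltaHull (chainG n) ↑Sf :=
          subset_deltaHull hmem
        exact ⟨h23, deltaHull_convex h22 h23 (adj_mk _ _ (by omega)) (adj_mk _ _ (by omega))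
          (adj_mk _ _ (by omega))⟩
      · have h24 : (⟨2*i+4, hlt⟩ : Fin (2*n-1)) ∈ deltaHull (chainG n) ↑Sf :=
          subset_deltaHull hmem
        exact ⟨deltaHull_convex h22 h24 (adj_mk _ _ (by omega)) (adj_mk _ _ (by omega))
          (adj_mk _ _ (by omega)), h24⟩
    intro m hm hm1 hm2
    rcases (show m = 2*i+2 ∨ m = 2*i+3 ∨ m = 2*i+4 by omega) with rfl | rfl | rfl
    exacts [h22, hh.1, hh.2]
  | left i h hs ih =>
    have hn' : i + 3 ≤ n := F_le h
    have hlt0 : 2*i < 2*n-1 := by omega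
    have hlt1 : 2*i+1 < 2*n-1 := by omega
    have hlt2 : 2*i+2 < 2*n-1 := by omega
    have h22 : (⟨2*i+2, hlt2⟩ : Fin (2*n-1)) ∈ deltaHull (chainG n) ↑Sf :=
      ih _ hlt2 (by omega) (by omega)
    have hh : (⟨2*i, hlt0⟩ : Fin (2*n-1)) ∈ deltaHull (chainG n) ↑Sf ∧
        (⟨2*i+1, hlt1⟩ : Fin (2*n-1)) ∈ deltaHull (chainG n) ↑Sf := by
      rcases hs with ⟨hlt, hmem⟩ | ⟨hlt, hmem⟩
      · have h20 : (⟨2*i, hlt⟩ : Fin (2*n-1)) ∈ deltaHull (chainG n) ↑Sf :=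
          subset_deltaHull hmem
        exact ⟨h20, deltaHull_convex h20 h22 (adj_mk _ _ (by omega)) (adj_mk _ _ (by omega))
          (adj_mk _ _ (by omega))⟩
      · have h21 : (⟨2*i+1, hlt⟩ : Fin (2*n-1)) ∈ deltaHull (chainG n) ↑Sf :=
          subset_deltaHull hmem
        exact ⟨deltaHull_convex h21 h22 (adj_mk _ _ (by omega)) (adj_mk _ _ (by omega))
          (adj_mk _ _ (by omega)), h21⟩
    intro m hm hm1 hm2
    rcases (show m = 2*i ∨ m = 2*i+1 ∨ m = 2*i+2 by omega) with rfl | rfl | rfl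
    exacts [hh.1, hh.2, h22]
  | merge i h1 h2 ih1 ih2 =>
    have hn' : i + 4 ≤ n := F_le h2
    have hlt2 : 2*i+2 < 2*n-1 := by omega
    have hlt3 : 2*i+3 < 2*n-1 := by omega
    have hlt4 : 2*i+4 < 2*n-1 := by omega
    have h22 : (⟨2*i+2, hlt2⟩ : Fin (2*n-1)) ∈ deltaHull (chainG n) ↑Sf :=
      ih1 _ hlt2 (by omega) (by omega)
    have h24 : (⟨2*i+4, hlt4⟩ : Fin (2*n-1)) ∈ deltaHull (chainG n) ↑Sf :=
      ih2 _ hlt4 (by omega) (by omega)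
    have h23 : (⟨2*i+3, hlt3⟩ : Fin (2*n-1)) ∈ deltaHull (chainG n) ↑Sf :=
      deltaHull_convex h22 h24 (adj_mk _ _ (by omega)) (adj_mk _ _ (by omega))
        (adj_mk _ _ (by omega))
    intro m hm hm1 hm2
    rcases (show m = 2*i+2 ∨ m = 2*i+3 ∨ m = 2*i+4 by omega) with rfl | rfl | rfl
    exacts [h22, h23, h24]

/-- Lemma B: quantitative generation. -/
lemma count {n : ℕ} (Sf : Finset (Fin (2*n-1))) {i : ℕ} (h : Ftri n (valS n Sf) i) :
    ∃ (l : ℕ) (r : ℕ) (S' : Finset (Fin (2*n-1))), S' ⊆ Sf ∧ l ≤ i ∧ i ≤ r ∧ S'.card ≤ r - l + 2 ∧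
      ∀ j, l ≤ j → j ≤ r → Ftri n (valS n S') j := by
  induction h with
  | seed i u v hu hv huv h1 h2 h3 h4 hin =>
    obtain ⟨hult, humem⟩ := hu
    obtain ⟨hvlt, hvmem⟩ := hv
    refine ⟨i, i, {⟨u, hult⟩, ⟨v, hvlt⟩}, ?_, le_refl i, le_refl i, ?_, ?_⟩
    · intro x hx
      simp only [Finset.mem_insert, Finset.mem_singleton] at hx
      rcases hx with rfl | rfl
      exacts [humem, hvmem]
    · calc ({⟨u, hult⟩, ⟨v, hvlt⟩} : Finset (Fin (2*n-1))).card
          ≤ ({⟨v, hvlt⟩} : Finset (Fin (2*n-1))).card + 1 := Finset.card_insert_le _ _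
        _ ≤ i - i + 2 := by simp
    · intro j hj1 hj2
      have hji : j = i := le_antisymm hj2 hj1
      rw [hji]
      refine Ftri.seed i u v ?_ ?_ huv h1 h2 h3 h4 hin
      · exact ⟨hult, by simp⟩
      · exact ⟨hvlt, by simp⟩
  | right i h hs hin ih =>
    obtain ⟨l, r, S', hsub, hl, hr, hcard, hAll⟩ := ih
    by_cases hri : i + 1 ≤ r
    · exact ⟨l, r, S', hsub, by omega, hri, hcard, hAll⟩
    · have hri' : r = i := by omega
      subst hri'
      rcases hs with ⟨hlt, hmem⟩ | ⟨hlt, hmem⟩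
      · refine ⟨l, r+1, insert ⟨2*r+3, hlt⟩ S', Finset.insert_subset hmem hsub,
          by omega, le_refl _, ?_, ?_⟩
        · calc (insert (⟨2*r+3, hlt⟩ : Fin (2*n-1)) S').card ≤ S'.card + 1 :=
              Finset.card_insert_le _ _
            _ ≤ r + 1 - l + 2 := by omega
        · intro j hj1 hj2
          by_cases hj : j ≤ r
          · exact F_mono (valS_mono (Finset.subset_insert _ _)) (hAll j hj1 hj)
          · obtain rfl : j = r + 1 := by omega
            exact .right r (F_mono (valS_mono (Finset.subset_insert _ _)) (hAll r hl le_rfl))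
              (Or.inl ⟨hlt, Finset.mem_insert_self _ _⟩) hin
      · refine ⟨l, r+1, insert ⟨2*r+4, hlt⟩ S', Finset.insert_subset hmem hsub,
          by omega, le_refl _, ?_, ?_⟩
        · calc (insert (⟨2*r+4, hlt⟩ : Fin (2*n-1)) S').card ≤ S'.card + 1 :=
              Finset.card_insert_le _ _
            _ ≤ r + 1 - l + 2 := by omega
        · intro j hj1 hj2
          by_cases hj : j ≤ r
          · exact F_mono (valS_mono (Finset.subset_insert _ _)) (hAll j hj1 hj)
          · obtain rfl : j = r + 1 := by omega
            exact .right r (F_mono (valS_mono (Finset.subset_insert _ _)) (hAll r hl le_rfl))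
              (Or.inr ⟨hlt, Finset.mem_insert_self _ _⟩) hin
  | left i h hs ih =>
    obtain ⟨l, r, S', hsub, hl, hr, hcard, hAll⟩ := ih
    by_cases hli : l ≤ i
    · exact ⟨l, r, S', hsub, hli, by omega, hcard, hAll⟩
    · have hli' : l = i + 1 := by omega
      subst hli'
      rcases hs with ⟨hlt, hmem⟩ | ⟨hlt, hmem⟩
      · refine ⟨i, r, insert ⟨2*i, hlt⟩ S', Finset.insert_subset hmem hsub,
          le_refl _, by omega, ?_, ?_⟩
        · calc (insert (⟨2*i, hlt⟩ : Fin (2*n-1)) S').card ≤ S'.card + 1 :=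
              Finset.card_insert_le _ _
            _ ≤ r - i + 2 := by omega
        · intro j hj1 hj2
          by_cases hj : i + 1 ≤ j
          · exact F_mono (valS_mono (Finset.subset_insert _ _)) (hAll j hj hj2)
          · have hji : j = i := by omega
            rw [hji]
            exact .left i (F_mono (valS_mono (Finset.subset_insert _ _)) (hAll (i+1) le_rfl hr))
              (Or.inl ⟨hlt, Finset.mem_insert_self _ _⟩)
      · refine ⟨i, r, insert ⟨2*i+1, hlt⟩ S', Finset.insert_subset hmem hsub,
          le_refl _, by omega, ?_, ?_⟩
        · calc (insert (⟨2*i+1, hlt⟩ : Fin (2*n-1)) S').card ≤ S'.card + 1 :=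
              Finset.card_insert_le _ _
            _ ≤ r - i + 2 := by omega
        · intro j hj1 hj2
          by_cases hj : i + 1 ≤ j
          · exact F_mono (valS_mono (Finset.subset_insert _ _)) (hAll j hj hj2)
          · have hji : j = i := by omega
            rw [hji]
            exact .left i (F_mono (valS_mono (Finset.subset_insert _ _)) (hAll (i+1) le_rfl hr))
              (Or.inr ⟨hlt, Finset.mem_insert_self _ _⟩)
  | merge i h1 h2 ih1 ih2 =>
    obtain ⟨l1, r1, S1, hsub1, hl1, hr1, hcard1, hAll1⟩ := ih1
    obtain ⟨l2, r2, S2, hsub2, hl2, hr2, hcard2, hAll2⟩ := ih2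
    by_cases hc1 : i + 1 ≤ r1
    · exact ⟨l1, r1, S1, hsub1, by omega, hc1, hcard1, hAll1⟩
    by_cases hc2 : l2 ≤ i + 1
    · exact ⟨l2, r2, S2, hsub2, hc2, by omega, hcard2, hAll2⟩
    have e1 : r1 = i := by omega
    have e2 : l2 = i + 2 := by omega
    refine ⟨l1, r2, S1 ∪ S2, Finset.union_subset hsub1 hsub2, by omega, by omega, ?_, ?_⟩
    · calc (S1 ∪ S2).card ≤ S1.card + S2.card := Finset.card_union_le _ _
        _ ≤ r2 - l1 + 2 := by omega
    · intro j hj1 hj2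
      rcases (show j ≤ i ∨ j = i + 1 ∨ i + 2 ≤ j by omega) with hj | rfl | hj
      · exact F_mono (valS_mono Finset.subset_union_left) (hAll1 j hj1 (by omega))
      · exact .merge i
          (F_mono (valS_mono Finset.subset_union_left) (hAll1 i hl1 (by omega)))
          (F_mono (valS_mono Finset.subset_union_right) (hAll2 (i+2) (by omega) (by omega)))
      · exact F_mono (valS_mono Finset.subset_union_right) (hAll2 j (by omega) hj2)

lemma chain_upper {n : ℕ} (Sf : Finset (Fin (2*n-1))) (h : CIndep (chainG n) Sf) :
    Sf.card ≤ n := by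
  by_contra hc
  push_neg at hc
  obtain ⟨p, hp, hmin⟩ := h
  rcases hull_sub Sf hp with ⟨hlt, hpS⟩ | ⟨i, hF, h1, h2⟩
  · obtain ⟨a, haS, hap⟩ := Finset.exists_mem_ne (s := Sf) (by omega) p
    refine hmin a haS (subset_deltaHull ?_)
    exact Finset.mem_coe.mpr (Finset.mem_erase.mpr ⟨Ne.symm hap, hpS⟩)
  · obtain ⟨l, r, S', hsub, hl, hr, hcard, hAll⟩ := count Sf hF
    have hrn : r + 2 ≤ n := F_le (hAll r (le_trans hl hr) le_rfl)
    have : ¬ Sf ⊆ S' := fun hss => by have := Finset.card_le_card hss; omega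
    obtain ⟨a, haS, haS'⟩ := Finset.not_subset.mp this
    have hsub' : S' ⊆ Sf.erase a := fun x hx =>
      Finset.mem_erase.mpr ⟨fun hxa => haS' (hxa ▸ hx), hsub hx⟩
    have hpin : p ∈ deltaHull (chainG n) ↑(Sf.erase a) := by
      have hp' := triangle_sub_hull S' (hAll i hl hr) p.val p.isLt h1 h2
      exact deltaHull_mono (Finset.coe_subset.mpr hsub') hp'
    exact hmin a haS hpin

def seedSet (n : ℕ) : Finset (Fin (2*n-1)) :=
  Finset.univ.image (fun k : Fin n => (⟨2*k.val-1, by have := k.isLt; omega⟩ : Fin (2*n-1)))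

lemma seedSet_card (n : ℕ) : (seedSet n).card = n := by
  rw [seedSet, Finset.card_image_of_injective _ ?_, Finset.card_univ, Fintype.card_fin]
  intro a b hab
  have ha := a.isLt; have hb := b.isLt
  have h : 2*a.val-1 = 2*b.val-1 := congrArg Fin.val hab
  exact Fin.ext (by omega)

lemma mem_seedSet {n : ℕ} {x : Fin (2*n-1)} :
    x ∈ seedSet n ↔ ∃ k, k < n ∧ x.val = 2*k-1 := by
  constructor
  · intro hx
    obtain ⟨k, _, hk⟩ := Finset.mem_image.mp hx
    exact ⟨k.val, k.isLt, (congrArg Fin.val hk).symm⟩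
  · rintro ⟨k, hk, hval⟩
    refine Finset.mem_image.mpr ⟨⟨k, hk⟩, Finset.mem_univ _, ?_⟩
    exact Fin.ext hval.symm

lemma evens_in_hull {n : ℕ} (hn : 1 ≤ n) :
    ∀ k, (hk : k < n) → (⟨2*k, by omega⟩ : Fin (2*n-1)) ∈ deltaHull (chainG n) ↑(seedSet n) := by
  intro k
  induction k with
  | zero =>
    intro hk
    refine subset_deltaHull (Finset.mem_coe.mpr (mem_seedSet.mpr ⟨0, hn, ?_⟩))
    simp
  | succ k ih =>
    intro hk
    have h2k : (⟨2*k, by omega⟩ : Fin (2*n-1)) ∈ deltaHull (chainG n) ↑(seedSet n) :=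
      ih (by omega)
    have hodd : (⟨2*k+1, by omega⟩ : Fin (2*n-1)) ∈ deltaHull (chainG n) ↑(seedSet n) :=
      subset_deltaHull (Finset.mem_coe.mpr (mem_seedSet.mpr ⟨k+1, hk, show 2*k+1 = 2*(k+1)-1 by omega⟩))
    have : (⟨2*k+2, by omega⟩ : Fin (2*n-1)) ∈ deltaHull (chainG n) ↑(seedSet n) :=
      deltaHull_convex h2k hodd (adj_mk _ _ (by omega)) (adj_mk _ _ (by omega))
        (adj_mk _ _ (by omega))
    have he : (⟨2*(k+1), by omega⟩ : Fin (2*n-1)) = (⟨2*k+2, by omega⟩ : Fin (2*n-1)) :=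
      Fin.ext (show 2*(k+1) = 2*k+2 by omega)
    rw [he]
    exact this

lemma seed_cindep {n : ℕ} (hn : 1 ≤ n) : CIndep (chainG n) (seedSet n) := by
  have hplt : 2*n-2 < 2*n-1 := by omega
  refine ⟨⟨2*n-2, hplt⟩, ?_, ?_⟩
  · have := evens_in_hull hn (n-1) (by omega)
    have he : (⟨2*(n-1), by omega⟩ : Fin (2*n-1)) = (⟨2*n-2, hplt⟩ : Fin (2*n-1)) :=
      Fin.ext (show 2*(n-1) = 2*n-2 by omega)
    rwa [he] at this
  · intro a ha hmem
    obtain ⟨k, hk, hval⟩ := mem_seedSet.mp ha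
    -- the convex blocker
    have hT : deltaHull (chainG n) ↑((seedSet n).erase a) ⊆
        {v : Fin (2*n-1) | (v.val % 2 = 0 ∧ v.val < a.val) ∨ (v.val % 2 = 1 ∧ v.val ≠ a.val)} := by
      apply deltaHull_min
      · intro x hx
        obtain ⟨hxa, hxS⟩ := Finset.mem_erase.mp hx
        obtain ⟨j, hj, hjval⟩ := mem_seedSet.mp hxS
        have hxav : x.val ≠ a.val := fun h => hxa (Fin.ext h)
        simp only [Set.mem_setOf_eq]
        omega
      · intro w u v huT hvT h1 h2 h3
        simp only [Set.mem_setOf_eq] at huT hvT ⊢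
        obtain ⟨h1a, h1b⟩ := h1
        obtain ⟨h2a, h2b⟩ := h2
        obtain ⟨h3a, h3b⟩ := h3
        omega
    have := hT hmem
    simp only [Set.mem_setOf_eq] at this
    omega

theorem stmt_6 (n : ℕ) (hn : 1 ≤ n) :
    ∃ (W : Type) (d : DecidableEq W) (i : Fintype W) (G : SimpleGraph W),
      @deltaCaratheodoryNumber W d i G = n := by
  refine ⟨Fin (2*n-1), inferInstance, inferInstance, chainG n, ?_⟩
  have hmem : n ∈ {m : ℕ | ∃ S : Finset (Fin (2*n-1)), CIndep (chainG n) S ∧ S.card = m} :=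
    ⟨seedSet n, seed_cindep hn, seedSet_card n⟩
  have hub : ∀ m ∈ {m : ℕ | ∃ S : Finset (Fin (2*n-1)), CIndep (chainG n) S ∧ S.card = m},
      m ≤ n := by
    rintro m ⟨S, hS, rfl⟩
    exact chain_upper S hS
  exact le_antisymm (csSup_le ⟨n, hmem⟩ hub) (le_csSup ⟨n, hub⟩ hmem)
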